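/- arXiv:2403.00916 — 2 statements merged into one kernel-verified Lean document; each statement's English description precedes it below -/
import Mathlib

section
/- In the abstract affects setting (with O not assumed injective), suppose the embedding O satisfies compat with respect to A. If A(X,Y,Z) holds and is Irred₃, then for every e ∈ Z: F̄_s(X ∪ Y) ∩ F̄_s(Z ∖ {e}) ⊆ J⁺(O e). -/
/-- The causal future `J⁺(t) = {t' : t ≤ t'}` of a point in a partially ordered set. -/
def Jplus {T : Type*} [PartialOrder T] (t : T) : Set T := {t' : T | t ≤ t'}

/-- The support future `F̄_s(W) = ⋂_{w ∈ W} J⁺(O w)` of a finite set of random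
variable labels under an embedding `O` (with `F̄_s(∅) = T`). -/
def suppFuture {S T : Type*} [PartialOrder T] (O : S → T) (W : Finset S) : Set T :=
  ⋂ w ∈ W, Jplus (O w)

/-- `X ⊨ Y|do(Z)` is Irred₁ (relative to the set of affects relations `A`) if for
every nonempty strict subset `s_X ⊊ X`, `A s_X Y ((X∖s_X) ∪ Z)` holds. -/
def Irred1 {S : Type*} [DecidableEq S] (A : Finset S → Finset S → Finset S → Prop)
    (X Y Z : Finset S) : Prop :=
  ∀ sX : Finset S, sX ⊆ X → sX.Nonempty → sX ≠ X → A sX Y ((X \ sX) ∪ Z)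

/-- `X ⊨ Y|do(Z)` is Irred₃ (relative to `A`) if for every nonempty `s_Z ⊆ Z`,
`A s_Z Y (X ∪ (Z∖s_Z))` holds or `A s_Z Y (Z∖s_Z)` holds. -/
def Irred3 {S : Type*} [DecidableEq S] (A : Finset S → Finset S → Finset S → Prop)
    (X Y Z : Finset S) : Prop :=
  ∀ sZ : Finset S, sZ ⊆ Z → sZ.Nonempty →
    (A sZ Y (X ∪ (Z \ sZ)) ∨ A sZ Y (Z \ sZ))

/-- The embedding `O` satisfies compat with respect to `A` if for every triple of
pairwise disjoint finite sets with `X, Y` nonempty such that `A X Y Z` holds and is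
Irred₁, one has `F̄_s(Y ∪ Z) ⊆ F̄_s(X)`. -/
def Compat {S T : Type*} [DecidableEq S] [PartialOrder T]
    (A : Finset S → Finset S → Finset S → Prop) (O : S → T) : Prop :=
  ∀ X Y Z : Finset S, Disjoint X Y → Disjoint X Z → Disjoint Y Z →
    X.Nonempty → Y.Nonempty → A X Y Z → Irred1 A X Y Z →
    suppFuture O (Y ∪ Z) ⊆ suppFuture O X

lemma suppFuture_union {S T : Type*} [PartialOrder T] [DecidableEq S] (O : S → T)
    (W1 W2 : Finset S) :
    suppFuture O (W1 ∪ W2) = suppFuture O W1 ∩ suppFuture O W2 := by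
  ext t; simp [suppFuture, or_imp, forall_and]

lemma irred1_singleton {S : Type*} [DecidableEq S]
    (A : Finset S → Finset S → Finset S → Prop) (e : S) (Y Z : Finset S) :
    Irred1 A {e} Y Z := by
  intro sX hsub hne hneq
  exact absurd ((Finset.Nonempty.subset_singleton_iff hne).mp hsub) hneq

/-- If the embedding `O` satisfies compat with respect to `A`, and `A X Y Z` holds
and is Irred₃, then for every `e ∈ Z`,
`F̄_s(X ∪ Y) ∩ F̄_s(Z ∖ {e}) ⊆ J⁺(O e)`. -/
theorem suppFuture_inter_subset_of_irred3 {S T : Type*} [DecidableEq S] [PartialOrder T]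
    (A : Finset S → Finset S → Finset S → Prop) (O : S → T)
    (hc : Compat A O) (X Y Z : Finset S)
    (hXY : Disjoint X Y) (hXZ : Disjoint X Z) (hYZ : Disjoint Y Z)
    (hX : X.Nonempty) (hY : Y.Nonempty)
    (hA : A X Y Z) (h3 : Irred3 A X Y Z) :
    ∀ e ∈ Z, suppFuture O (X ∪ Y) ∩ suppFuture O (Z \ {e}) ⊆ Jplus (O e) := by
  intro e he
  have heX : e ∉ X := fun h => (hXZ.forall_ne_finset h he) rfl
  have heY : e ∉ Y := fun h => ((hYZ.symm).forall_ne_finset he h) rfl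
  have heZ' : e ∉ Z \ {e} := by simp
  have hdYZ' : Disjoint Y (Z \ {e}) := hYZ.mono_right (Finset.sdiff_subset)
  have hdXZ' : Disjoint X (Z \ {e}) := hXZ.mono_right (Finset.sdiff_subset)
  have key : suppFuture O (Y ∪ (X ∪ Z \ {e})) ⊆ suppFuture O {e} := by
    rcases h3 {e} (Finset.singleton_subset_iff.mpr he) (Finset.singleton_nonempty e) with h | h
    · exact hc {e} Y (X ∪ Z \ {e})
        (Finset.disjoint_singleton_left.mpr heY)
        (Finset.disjoint_singleton_left.mpr (by simp [heX]))
        (Finset.disjoint_union_right.mpr ⟨hXY.symm, hdYZ'⟩)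
        (Finset.singleton_nonempty e) hY h (irred1_singleton A e _ _)
    · have := hc {e} Y (Z \ {e})
        (Finset.disjoint_singleton_left.mpr heY)
        (Finset.disjoint_singleton_left.mpr heZ')
        hdYZ'
        (Finset.singleton_nonempty e) hY h (irred1_singleton A e _ _)
      intro t ht
      apply this
      rw [suppFuture_union] at ht ⊢
      rw [suppFuture_union] at ht
      exact ⟨ht.1, ht.2.2⟩
  intro t ht
  have : t ∈ suppFuture O {e} := by
    apply key
    simp only [suppFuture_union] at ht ⊢
    exact ⟨ht.1.2, ht.1.1, ht.2⟩
  simpa [suppFuture] using this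
end

section
/- In the abstract affects setting, let T be a conical poset, let O be injective (non-degenerate embedding), and suppose O satisfies compat with respect to A. If A(X,Y,Z) holds and is both Irred₁ and Irred₃, then F̄_s(Y) ⊆ F̄_s(X) ∩ F̄_s(Z). -/
/-- The joint future `f(L) = ⋂_{p ∈ L} J⁺(p)` of a subset of a poset (with `f(∅) = T`). -/
def jointFuture {T : Type*} [PartialOrder T] (L : Set T) : Set T := ⋂ p ∈ L, Jplus p

/-- The spanning set `span(L)`: the union of all subsets `L' ⊆ L` with
`f(L') = f(L)` such that no strict subset `L'' ⊊ L'` satisfies `f(L'') = f(L)`. -/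
def spanS {T : Type*} [PartialOrder T] (L : Set T) : Set T :=
  {x : T | ∃ L' : Set T, L' ⊆ L ∧ x ∈ L' ∧ jointFuture L' = jointFuture L ∧
    ∀ L'' : Set T, L'' ⊂ L' → jointFuture L'' ≠ jointFuture L}

/-- A poset is conical if for all nonempty finite subsets `L₁, L₂`,
`f(L₁) = f(L₂)` implies `span(L₁) = span(L₂)`. -/
def Conical (T : Type*) [PartialOrder T] : Prop :=
  ∀ L₁ L₂ : Set T, L₁.Finite → L₂.Finite → L₁.Nonempty → L₂.Nonempty →
    jointFuture L₁ = jointFuture L₂ → spanS L₁ = spanS L₂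

section Aux

variable {S T : Type*} [PartialOrder T]

lemma suppFuture_anti (O : S → T) {W W' : Finset S}
    (h : W ⊆ W') : suppFuture O W' ⊆ suppFuture O W := by
  intro x hx
  simp only [suppFuture, Set.mem_iInter] at *
  exact fun w hw => hx w (h hw)

lemma jointFuture_anti {L L' : Set T}
    (h : L ⊆ L') : jointFuture L' ⊆ jointFuture L := by
  intro x hx
  simp only [jointFuture, Set.mem_iInter] at *
  exact fun p hp => hx p (h hp)

lemma suppFuture_eq (O : S → T) (W : Finset S) :
    suppFuture O W = jointFuture (O '' ↑W) := by
  simp [suppFuture, jointFuture, Set.biInter_image]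

lemma suppFuture_subset_Jplus (O : S → T) {W : Finset S} {w : S} (hw : w ∈ W) :
    suppFuture O W ⊆ Jplus (O w) := by
  intro x hx
  simp only [suppFuture, Set.mem_iInter] at hx
  exact hx w hw

lemma Irred1_singleton [DecidableEq S] (A : Finset S → Finset S → Finset S → Prop)
    (w : S) (Y Z : Finset S) : Irred1 A {w} Y Z := by
  intro sX hsub hne hne'
  rcases Finset.subset_singleton_iff.1 hsub with rfl | rfl
  · exact absurd rfl hne.ne_empty
  · exact absurd rfl hne'

lemma spanS_subset (L : Set T) : spanS L ⊆ L := by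
  rintro x ⟨L', hL', hx, -, -⟩
  exact hL' hx

lemma exists_minimal_jointFuture {L : Set T} (hL : L.Finite) :
    ∃ L₀, L₀ ⊆ L ∧ jointFuture L₀ = jointFuture L ∧
      ∀ L'' ⊂ L₀, jointFuture L'' ≠ jointFuture L := by
  set C := {L' : Set T | L' ⊆ L ∧ jointFuture L' = jointFuture L} with hC
  have hCfin : C.Finite := hL.finite_subsets.subset fun L' hL' => hL'.1
  have hCne : C.Nonempty := ⟨L, subset_rfl, rfl⟩
  obtain ⟨L₀, hL₀, hmin'⟩ := hCfin.exists_minimal hCne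
  have hmin : ∀ L'' ∈ C, L'' ⊆ L₀ → L₀ = L'' := fun L'' h h' => le_antisymm (hmin' h h') h'
  refine ⟨L₀, hL₀.1, hL₀.2, ?_⟩
  intro L'' hsub hjeq
  exact hsub.ne (hmin L'' ⟨hsub.subset.trans hL₀.1, hjeq⟩ hsub.subset).symm

end Aux

/-- In a conical space-time with a non-degenerate (injective) compatible embedding,
an affects relation `A X Y Z` that is both Irred₁ and Irred₃ satisfies
`F̄_s(Y) ⊆ F̄_s(X) ∩ F̄_s(Z)`. -/
theorem compat_conical_irred1_irred3 {S T : Type*} [DecidableEq S] [PartialOrder T]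
    (A : Finset S → Finset S → Finset S → Prop) (O : S → T)
    (hT : Conical T) (hO : Function.Injective O) (hc : Compat A O)
    (X Y Z : Finset S)
    (hXY : Disjoint X Y) (hXZ : Disjoint X Z) (hYZ : Disjoint Y Z)
    (hX : X.Nonempty) (hY : Y.Nonempty)
    (hA : A X Y Z) (h1 : Irred1 A X Y Z) (h3 : Irred3 A X Y Z) :
    suppFuture O Y ⊆ suppFuture O X ∩ suppFuture O Z := by
  classical
  set W : Finset S := X ∪ Y ∪ Z with hW
  have hXW : X ⊆ W := fun s hs => Finset.mem_union_left _ (Finset.mem_union_left _ hs)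
  have hYW : Y ⊆ W := fun s hs => Finset.mem_union_left _ (Finset.mem_union_right _ hs)
  have hZW : Z ⊆ W := fun s hs => Finset.mem_union_right _ hs
  -- Step 1: for every w ∈ X ∪ Z, the support future of W minus w lies in J⁺(O w)
  have key : ∀ w ∈ X ∪ Z, suppFuture O (W.erase w) ⊆ Jplus (O w) := by
    intro w hw
    rcases Finset.mem_union.1 hw with hwX | hwZ
    · by_cases hx : ({w} : Finset S) = X
      · have h := hc X Y Z hXY hXZ hYZ hX hY hA h1
        have hsub : Y ∪ Z ⊆ W.erase w := by
          intro s hs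
          refine Finset.mem_erase.2 ⟨?_, ?_⟩
          · rintro rfl
            rcases Finset.mem_union.1 hs with h' | h'
            · exact Finset.disjoint_left.1 hXY hwX h'
            · exact Finset.disjoint_left.1 hXZ hwX h'
          · rcases Finset.mem_union.1 hs with h' | h'
            · exact hYW h'
            · exact hZW h'
        exact ((suppFuture_anti O hsub).trans h).trans (suppFuture_subset_Jplus O hwX)
      · have hA' := h1 {w} (Finset.singleton_subset_iff.2 hwX) ⟨w, Finset.mem_singleton_self w⟩ hx
        have d1 : Disjoint ({w} : Finset S) Y :=
          Finset.disjoint_singleton_left.2 (Finset.disjoint_left.1 hXY hwX)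
        have d2 : Disjoint ({w} : Finset S) ((X \ {w}) ∪ Z) := by
          refine Finset.disjoint_singleton_left.2 ?_
          intro h'
          rcases Finset.mem_union.1 h' with h'' | h''
          · exact (Finset.mem_sdiff.1 h'').2 (Finset.mem_singleton_self _)
          · exact Finset.disjoint_left.1 hXZ hwX h''
        have d3 : Disjoint Y ((X \ {w}) ∪ Z) :=
          Finset.disjoint_union_right.2 ⟨hXY.symm.mono_right Finset.sdiff_subset, hYZ⟩
        have h := hc {w} Y ((X \ {w}) ∪ Z) d1 d2 d3 ⟨w, Finset.mem_singleton_self w⟩ hY hA'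
          (Irred1_singleton A w Y _)
        have hsub : Y ∪ ((X \ {w}) ∪ Z) ⊆ W.erase w := by
          intro s hs
          refine Finset.mem_erase.2 ⟨?_, ?_⟩
          · rintro rfl
            rcases Finset.mem_union.1 hs with h' | h'
            · exact Finset.disjoint_left.1 hXY hwX h'
            · rcases Finset.mem_union.1 h' with h'' | h''
              · exact (Finset.mem_sdiff.1 h'').2 (Finset.mem_singleton_self _)
              · exact Finset.disjoint_left.1 hXZ hwX h''
          · rcases Finset.mem_union.1 hs with h' | h'
            · exact hYW h'
            · rcases Finset.mem_union.1 h' with h'' | h''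
              · exact hXW (Finset.mem_sdiff.1 h'').1
              · exact hZW h''
        refine ((suppFuture_anti O hsub).trans h).trans ?_
        exact suppFuture_subset_Jplus O (Finset.mem_singleton_self _)
    · have hwY : w ∉ Y := Finset.disjoint_right.1 hYZ hwZ
      have hwX' : w ∉ X := Finset.disjoint_right.1 hXZ hwZ
      have d1 : Disjoint ({w} : Finset S) Y := Finset.disjoint_singleton_left.2 hwY
      rcases h3 {w} (Finset.singleton_subset_iff.2 hwZ) ⟨w, Finset.mem_singleton_self w⟩
        with hA' | hA'
      · have d2 : Disjoint ({w} : Finset S) (X ∪ (Z \ {w})) := by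
          refine Finset.disjoint_singleton_left.2 ?_
          intro h'
          rcases Finset.mem_union.1 h' with h'' | h''
          · exact hwX' h''
          · exact (Finset.mem_sdiff.1 h'').2 (Finset.mem_singleton_self _)
        have d3 : Disjoint Y (X ∪ (Z \ {w})) :=
          Finset.disjoint_union_right.2 ⟨hXY.symm, hYZ.mono_right Finset.sdiff_subset⟩
        have h := hc {w} Y (X ∪ (Z \ {w})) d1 d2 d3 ⟨w, Finset.mem_singleton_self w⟩ hY hA'
          (Irred1_singleton A w Y _)
        have hsub : Y ∪ (X ∪ (Z \ {w})) ⊆ W.erase w := by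
          intro s hs
          refine Finset.mem_erase.2 ⟨?_, ?_⟩
          · rintro rfl
            rcases Finset.mem_union.1 hs with h' | h'
            · exact hwY h'
            · rcases Finset.mem_union.1 h' with h'' | h''
              · exact hwX' h''
              · exact (Finset.mem_sdiff.1 h'').2 (Finset.mem_singleton_self _)
          · rcases Finset.mem_union.1 hs with h' | h'
            · exact hYW h'
            · rcases Finset.mem_union.1 h' with h'' | h''
              · exact hXW h''
              · exact hZW (Finset.mem_sdiff.1 h'').1
        refine ((suppFuture_anti O hsub).trans h).trans ?_
        exact suppFuture_subset_Jplus O (Finset.mem_singleton_self _)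
      · have d2 : Disjoint ({w} : Finset S) (Z \ {w}) := by
          refine Finset.disjoint_singleton_left.2 ?_
          intro h'
          exact (Finset.mem_sdiff.1 h').2 (Finset.mem_singleton_self _)
        have d3 : Disjoint Y (Z \ {w}) := hYZ.mono_right Finset.sdiff_subset
        have h := hc {w} Y (Z \ {w}) d1 d2 d3 ⟨w, Finset.mem_singleton_self w⟩ hY hA'
          (Irred1_singleton A w Y _)
        have hsub : Y ∪ (Z \ {w}) ⊆ W.erase w := by
          intro s hs
          refine Finset.mem_erase.2 ⟨?_, ?_⟩
          · rintro rfl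
            rcases Finset.mem_union.1 hs with h' | h'
            · exact hwY h'
            · exact (Finset.mem_sdiff.1 h').2 (Finset.mem_singleton_self _)
          · rcases Finset.mem_union.1 hs with h' | h'
            · exact hYW h'
            · exact hZW (Finset.mem_sdiff.1 h').1
        refine ((suppFuture_anti O hsub).trans h).trans ?_
        exact suppFuture_subset_Jplus O (Finset.mem_singleton_self _)
  -- Step 2: translate to joint futures of images
  have hjf : ∀ w ∈ X ∪ Z,
      jointFuture ((O '' ↑W) \ {O w}) = jointFuture (O '' ↑W) := by
    intro w hw
    have himg : (O '' ↑W) \ {O w} = O '' ↑(W.erase w) := by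
      rw [Finset.coe_erase, Set.image_diff hO, Set.image_singleton]
    rw [himg]
    apply subset_antisymm
    · rw [← suppFuture_eq, ← suppFuture_eq]
      intro x hx
      simp only [suppFuture, Set.mem_iInter] at hx ⊢
      intro s hs
      by_cases hsw : s = w
      · subst hsw
        refine key s hw ?_
        simp only [suppFuture, Set.mem_iInter]
        exact hx
      · exact hx s (Finset.mem_erase.2 ⟨hsw, hs⟩)
    · refine jointFuture_anti (Set.image_mono (f := O) ?_)
      rw [Finset.coe_erase]
      exact Set.diff_subset
  have hWfin : (O '' (↑W : Set S)).Finite := W.finite_toSet.image O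
  obtain ⟨y, hy⟩ := hY
  have hWne : (O '' (↑W : Set S)).Nonempty := ⟨O y, Set.mem_image_of_mem O (hYW hy)⟩
  -- Step 3: the span of O '' W is contained in O '' Y
  have hspan : spanS (O '' ↑W) ⊆ O '' (↑Y : Set S) := by
    intro x hx
    obtain ⟨s, hsW, rfl⟩ := spanS_subset _ hx
    have hsW' : s ∈ W := hsW
    rcases Finset.mem_union.1 hsW' with hs | hs
    · rcases Finset.mem_union.1 hs with hsX | hsY
      · exfalso
        have hsXZ : s ∈ X ∪ Z := Finset.mem_union_left _ hsX
        have hne' : ((O '' ↑W) \ {O s}).Nonempty := by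
          refine ⟨O y, Set.mem_image_of_mem O (hYW hy), ?_⟩
          simp only [Set.mem_singleton_iff]
          intro h
          exact Finset.disjoint_left.1 hXY hsX (hO h ▸ hy)
        have heq := hT _ _ (hWfin.subset Set.diff_subset) hWfin hne' hWne (hjf s hsXZ)
        have : O s ∈ (O '' ↑W) \ {O s} := spanS_subset _ (heq ▸ hx)
        exact this.2 rfl
      · exact ⟨s, hsY, rfl⟩
    · exfalso
      have hsXZ : s ∈ X ∪ Z := Finset.mem_union_right _ hs
      have hne' : ((O '' ↑W) \ {O s}).Nonempty := by
        refine ⟨O y, Set.mem_image_of_mem O (hYW hy), ?_⟩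
        simp only [Set.mem_singleton_iff]
        intro h
        exact Finset.disjoint_left.1 hYZ (hO h ▸ hy) hs
      have heq := hT _ _ (hWfin.subset Set.diff_subset) hWfin hne' hWne (hjf s hsXZ)
      have : O s ∈ (O '' ↑W) \ {O s} := spanS_subset _ (heq ▸ hx)
      exact this.2 rfl
  -- Step 4: a minimal subset with the same joint future lies inside the span
  obtain ⟨L₀, hL₀sub, hL₀eq, hL₀min⟩ := exists_minimal_jointFuture hWfin
  have hL₀span : L₀ ⊆ spanS (O '' ↑W) := fun x hx => ⟨L₀, hL₀sub, hx, hL₀eq, hL₀min⟩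
  have hL₀Y : L₀ ⊆ O '' (↑Y : Set S) := hL₀span.trans hspan
  -- conclude
  have hfinal : suppFuture O Y ⊆ suppFuture O W := by
    rw [suppFuture_eq, suppFuture_eq]
    calc jointFuture (O '' (↑Y : Set S)) ⊆ jointFuture L₀ := jointFuture_anti hL₀Y
      _ = jointFuture (O '' ↑W) := hL₀eq
  exact Set.subset_inter (hfinal.trans (suppFuture_anti O hXW))
    (hfinal.trans (suppFuture_anti O hZW))
end
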